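/- Let μ > 0 and let B and B1 be independent random variables on a probability space, each distributed according to the exponential distribution with rate μ. Then E[ ∫_ℝ (D_PS(t; B, B1) − B) dt ] = 1/μ². -/

import Mathlib

open MeasureTheory ProbabilityTheory

/-- The conditional sojourn time under Processor Sharing of a tagged job of size `b`
arriving at time `0`, given exactly one other job of the same type with size `b1`
arriving at time `t` (closed form of the piecewise definition in Appendix E). -/
noncomputable def DPS (b b1 t : ℝ) : ℝ :=
  if t ≤ -b1 then b
  else if t ≤ 0 then b + min (b1 + t) b
  else if t ≤ b then b + min b1 (b - t)
  else b

lemma DPS_continuous {b b1 : ℝ} (hb : 0 ≤ b) (hb1 : 0 ≤ b1) :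
    Continuous (DPS b b1) := by
  have h3 : Continuous (fun t : ℝ => if t ≤ b then b + min b1 (b - t) else b) := by
    refine Continuous.if_le ?_ continuous_const continuous_id continuous_const ?_
    · exact continuous_const.add (continuous_const.min (continuous_const.sub continuous_id))
    · intro x hx
      subst hx
      rw [sub_self, min_eq_right hb1, add_zero]
  have h2 : Continuous (fun t : ℝ => if t ≤ 0 then b + min (b1 + t) b
      else if t ≤ b then b + min b1 (b - t) else b) := by
    refine Continuous.if_le ?_ h3 continuous_id continuous_const ?_
    · exact continuous_const.add ((continuous_const.add continuous_id).min continuous_const)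
    · intro x hx
      subst hx
      rw [if_pos hb, add_zero, sub_zero]
  unfold DPS
  refine Continuous.if_le continuous_const h2 continuous_id continuous_const ?_
  intro x hx
  subst hx
  rw [if_pos (by linarith : -b1 ≤ (0:ℝ)), add_neg_cancel, min_eq_left hb, add_zero]

lemma inner_integral_eq {b b1 : ℝ} (hb : 0 < b) (hb1 : 0 < b1) :
    ∫ t : ℝ, (DPS b b1 t - b) = b * b1 := by
  have hcont : Continuous fun t => DPS b b1 t - b :=
    (DPS_continuous hb.le hb1.le).sub continuous_const
  have hzero : ∀ t : ℝ, t ∉ Set.Ioc (-b1) b → DPS b b1 t - b = 0 := by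
    intro t ht
    rw [Set.mem_Ioc, not_and_or, not_lt, not_le] at ht
    unfold DPS
    rcases ht with h | h
    · rw [if_pos h]; ring
    · rw [if_neg (by linarith), if_neg (by linarith), if_neg (by linarith)]; ring
  have hind : (fun t => DPS b b1 t - b)
      = Set.indicator (Set.Ioc (-b1) b) (fun t => DPS b b1 t - b) := by
    funext t
    by_cases ht : t ∈ Set.Ioc (-b1) b
    · rw [Set.indicator_of_mem ht]
    · rw [Set.indicator_of_notMem ht, hzero t ht]
  rw [hind, integral_indicator measurableSet_Ioc,
    ← intervalIntegral.integral_of_le (by linarith : -b1 ≤ b)]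
  have hII : ∀ a c : ℝ, IntervalIntegrable (fun t => DPS b b1 t - b) volume a c :=
    fun a c => hcont.intervalIntegrable a c
  rcases le_total b b1 with hbb | hbb
  · -- b ≤ b1, split at b - b1 and 0
    rw [← intervalIntegral.integral_add_adjacent_intervals (hII (-b1) (b - b1)) (hII (b - b1) b),
      ← intervalIntegral.integral_add_adjacent_intervals (hII (b - b1) 0) (hII 0 b)]
    have e1 : ∫ t in (-b1)..(b - b1), (DPS b b1 t - b) = ∫ t in (-b1)..(b - b1), (b1 + t) := by
      apply intervalIntegral.integral_congr
      intro t ht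
      rw [Set.uIcc_of_le (by linarith)] at ht
      obtain ⟨h1, h2⟩ := ht
      simp only [DPS]
      split_ifs with hA hB hC
      · have : t = -b1 := le_antisymm hA h1
        subst this; ring
      · rw [min_eq_left (by linarith)]; ring
      · exfalso; linarith
      · exfalso; linarith
    have e2 : ∫ t in (b - b1)..(0 : ℝ), (DPS b b1 t - b) = ∫ t in (b - b1)..(0 : ℝ), b := by
      apply intervalIntegral.integral_congr
      intro t ht
      rw [Set.uIcc_of_le (by linarith)] at ht
      obtain ⟨h1, h2⟩ := ht
      simp only [DPS]
      split_ifs with hA hB hC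
      · exfalso; linarith
      · rw [min_eq_right (by linarith)]; ring
    have e3 : ∫ t in (0:ℝ)..b, (DPS b b1 t - b) = ∫ t in (0:ℝ)..b, (b - t) := by
      apply intervalIntegral.integral_congr
      intro t ht
      rw [Set.uIcc_of_le (by linarith)] at ht
      obtain ⟨h1, h2⟩ := ht
      simp only [DPS]
      split_ifs with hA hB hC
      · exfalso; linarith
      · have : t = 0 := le_antisymm hB h1
        subst this
        rw [add_zero, min_eq_right hbb]; ring
      · rw [min_eq_right (by linarith)]; ring
    rw [e1, e2, e3,
      intervalIntegral.integral_add intervalIntegrable_const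
        intervalIntegral.intervalIntegrable_id,
      intervalIntegral.integral_sub intervalIntegrable_const
        intervalIntegral.intervalIntegrable_id]
    simp only [integral_id, intervalIntegral.integral_const, smul_eq_mul]
    ring
  · -- b1 ≤ b, split at 0 and b - b1
    rw [← intervalIntegral.integral_add_adjacent_intervals (hII (-b1) 0) (hII 0 b),
      ← intervalIntegral.integral_add_adjacent_intervals (hII 0 (b - b1)) (hII (b - b1) b)]
    have e1 : ∫ t in (-b1)..(0:ℝ), (DPS b b1 t - b) = ∫ t in (-b1)..(0:ℝ), (b1 + t) := by
      apply intervalIntegral.integral_congr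
      intro t ht
      rw [Set.uIcc_of_le (by linarith)] at ht
      obtain ⟨h1, h2⟩ := ht
      simp only [DPS]
      split_ifs with hA hB hC
      · have : t = -b1 := le_antisymm hA h1
        subst this; ring
      · rw [min_eq_left (by linarith)]; ring
    have e2 : ∫ t in (0:ℝ)..(b - b1), (DPS b b1 t - b) = ∫ t in (0:ℝ)..(b - b1), b1 := by
      apply intervalIntegral.integral_congr
      intro t ht
      rw [Set.uIcc_of_le (by linarith)] at ht
      obtain ⟨h1, h2⟩ := ht
      simp only [DPS]
      split_ifs with hA hB hC
      · exfalso; linarith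
      · have : t = 0 := le_antisymm hB h1
        subst this
        rw [add_zero, min_eq_left hbb]; ring
      · rw [min_eq_left (by linarith)]; ring
      · exfalso; linarith
    have e3 : ∫ t in (b - b1)..b, (DPS b b1 t - b) = ∫ t in (b - b1)..b, (b - t) := by
      apply intervalIntegral.integral_congr
      intro t ht
      rw [Set.uIcc_of_le (by linarith)] at ht
      obtain ⟨h1, h2⟩ := ht
      simp only [DPS]
      split_ifs with hA hB hC
      · exfalso; linarith
      · have ht0 : t = 0 := le_antisymm hB (by linarith)
        subst ht0
        rw [add_zero, min_eq_left (by linarith : b1 ≤ b), sub_zero]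
        have : b = b1 := by linarith
        linarith
      · rw [min_eq_right (by linarith)]; ring
    rw [e1, e2, e3,
      intervalIntegral.integral_add intervalIntegrable_const
        intervalIntegral.intervalIntegrable_id,
      intervalIntegral.integral_sub intervalIntegrable_const
        intervalIntegral.intervalIntegrable_id]
    simp only [integral_id, intervalIntegral.integral_const, smul_eq_mul]
    ring


lemma exponentialPDFReal_eq (r x : ℝ) :
    exponentialPDFReal r x = if 0 ≤ x then r * Real.exp (-(r * x)) else 0 := by
  rw [exponentialPDFReal, gammaPDFReal]
  simp only [Real.rpow_one, Real.Gamma_one, div_one, sub_self, Real.rpow_zero, mul_one]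

lemma integral_id_expMeasure {r : ℝ} (hr : 0 < r) :
    ∫ x, x ∂(expMeasure r) = 1 / r := by
  have hmeas : Measurable fun x => (exponentialPDFReal r x).toNNReal :=
    (measurable_exponentialPDFReal r).real_toNNReal
  have hmeq : expMeasure r
      = MeasureTheory.volume.withDensity fun x => ((exponentialPDFReal r x).toNNReal : ENNReal) :=
    rfl
  rw [hmeq, integral_withDensity_eq_integral_smul hmeas]
  have key : (fun x : ℝ => (exponentialPDFReal r x).toNNReal • x)
      = Set.indicator (Set.Ioi 0) (fun y => r * (y * Real.exp (-(r * y)))) := by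
    funext x
    rw [NNReal.smul_def, Real.coe_toNNReal _ (exponentialPDFReal_nonneg hr x), smul_eq_mul,
      exponentialPDFReal_eq]
    rcases lt_trichotomy x 0 with hx | hx | hx
    · rw [if_neg (not_le.mpr hx),
        Set.indicator_of_notMem (by simp only [Set.mem_Ioi, not_lt]; exact hx.le)]
      ring
    · subst hx
      simp
    · rw [if_pos hx.le, Set.indicator_of_mem (Set.mem_Ioi.mpr hx)]
      ring
  rw [key, integral_indicator measurableSet_Ioi, integral_const_mul]
  have hval : ∫ x in Set.Ioi (0:ℝ), x * Real.exp (-(r * x))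
      = (1 / r) ^ (2:ℝ) * Real.Gamma 2 := by
    rw [← Real.integral_rpow_mul_exp_neg_mul_Ioi (by norm_num : (0:ℝ) < 2) hr]
    apply setIntegral_congr_fun measurableSet_Ioi
    intro x hx
    simp only [show (2:ℝ) - 1 = 1 by norm_num, Real.rpow_one]
  rw [hval, Real.Gamma_two, mul_one,
    show (2:ℝ) = ((2:ℕ):ℝ) by norm_num, Real.rpow_natCast]
  field_simp

lemma ae_pos_of_exp {Ω : Type*} [MeasureSpace Ω] {r : ℝ} (hr : 0 < r)
    (X : Ω → ℝ) (hX : Measurable X) (hlaw : Measure.map X ℙ = expMeasure r) :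
    ∀ᵐ ω ∂(ℙ : Measure Ω), 0 < X ω := by
  have hexp : expMeasure r (Set.Iic 0) = 0 := by
    rw [expMeasure, gammaMeasure, withDensity_apply _ measurableSet_Iic]
    have h := lintegral_exponentialPDF_eq_antiDeriv hr 0
    rw [show gammaPDF 1 r = exponentialPDF r from rfl, h]
    simp
  have hiic : ℙ (X ⁻¹' Set.Iic 0) = 0 := by
    rw [← Measure.map_apply hX measurableSet_Iic, hlaw]
    exact hexp
  have hset : {ω | ¬ 0 < X ω} = X ⁻¹' Set.Iic 0 := by
    ext ω; simp [not_lt]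
  rw [ae_iff, hset]
  exact hiic

/-- The PS first light-traffic derivative of Lemma 7.1 (up to the factor
`1/(K choose d)`): if `B` and `B1` are independent, each exponentially distributed
with rate `μ`, then `E[∫_ℝ (D_PS(t; B, B1) − B) dt] = 1/μ²`. -/
theorem lightTraffic_PS_derivative {Ω : Type*} [MeasureSpace Ω]
    [IsProbabilityMeasure (ℙ : Measure Ω)]
    (μ : ℝ) (hμ : 0 < μ)
    (B B1 : Ω → ℝ) (hB : Measurable B) (hB1 : Measurable B1)
    (hind : IndepFun B B1 ℙ)
    (hlawB : Measure.map B ℙ = expMeasure μ)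
    (hlawB1 : Measure.map B1 ℙ = expMeasure μ) :
    ∫ ω, (∫ t : ℝ, (DPS (B ω) (B1 ω) t - B ω)) ∂ℙ = 1 / μ ^ 2 := by
  have hae : ∀ᵐ ω ∂(ℙ : Measure Ω),
      (∫ t : ℝ, (DPS (B ω) (B1 ω) t - B ω)) = B ω * B1 ω := by
    filter_upwards [ae_pos_of_exp hμ B hB hlawB, ae_pos_of_exp hμ B1 hB1 hlawB1] with ω h1 h2
    exact inner_integral_eq h1 h2
  rw [integral_congr_ae hae]
  have hmul : ∫ ω, B ω * B1 ω ∂ℙ = (∫ ω, B ω ∂ℙ) * ∫ ω, B1 ω ∂ℙ :=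
    hind.integral_fun_mul_eq_mul_integral hB.aestronglyMeasurable hB1.aestronglyMeasurable
  have hEB : ∫ ω, B ω ∂ℙ = 1 / μ := by
    have := integral_map (μ := (ℙ : Measure Ω)) hB.aemeasurable
      (aestronglyMeasurable_id (μ := Measure.map B ℙ))
    rw [hlawB] at this
    rw [show (fun ω => B ω) = fun ω => id (B ω) from rfl]
    rw [← this]
    exact integral_id_expMeasure hμ
  have hEB1 : ∫ ω, B1 ω ∂ℙ = 1 / μ := by
    have := integral_map (μ := (ℙ : Measure Ω)) hB1.aemeasurable
      (aestronglyMeasurable_id (μ := Measure.map B1 ℙ))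
    rw [hlawB1] at this
    rw [show (fun ω => B1 ω) = fun ω => id (B1 ω) from rfl]
    rw [← this]
    exact integral_id_expMeasure hμ
  rw [hmul, hEB, hEB1]
  field_simp
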